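/- Let p be a prime and k a positive integer. Then the polynomial ψ(X,Y,Z) = X^{p^k+1} − Y^{p^k+1} − Z^{p^k+1} + (−X+Y+Z)^{p^k+1} ∈ F_p[X,Y,Z] is square-free, i.e., it is not divisible by the square of any nonconstant polynomial. -/

import Mathlib

open MvPolynomial

private lemma prime_X0_sub_X_succ (p : ℕ) [Fact p.Prime] (j : Fin 2) :
    Prime (X 0 - X j.succ : MvPolynomial (Fin 3) (ZMod p)) := by
  have h := (MulEquiv.prime_iff (finSuccEquiv (ZMod p) 2).toMulEquiv
    (p := (X 0 - X j.succ : MvPolynomial (Fin 3) (ZMod p)))).mp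
  apply h
  show Prime ((finSuccEquiv (ZMod p) 2) (X 0 - X j.succ))
  rw [map_sub, finSuccEquiv_X_zero, finSuccEquiv_X_succ]
  exact Polynomial.prime_X_sub_C _

theorem psi_squarefree (p k : ℕ) (hp : p.Prime) (hk : 0 < k) :
    Squarefree (X 0 ^ (p ^ k + 1) - X 1 ^ (p ^ k + 1) - X 2 ^ (p ^ k + 1) +
      (-X 0 + X 1 + X 2) ^ (p ^ k + 1) : MvPolynomial (Fin 3) (ZMod p)) := by
  haveI : Fact p.Prime := ⟨hp⟩
  set ψ : MvPolynomial (Fin 3) (ZMod p) :=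
    X 0 ^ (p ^ k + 1) - X 1 ^ (p ^ k + 1) - X 2 ^ (p ^ k + 1) +
      (-X 0 + X 1 + X 2) ^ (p ^ k + 1) with hψ
  have hc : ((p ^ k + 1 : ℕ) : MvPolynomial (Fin 3) (ZMod p)) = 1 := by
    push_cast
    rw [CharP.cast_eq_zero (MvPolynomial (Fin 3) (ZMod p)) p]
    simp [zero_pow hk.ne']
  have key1 : pderiv 0 ψ + pderiv 1 ψ = (X 0 - X 1) ^ p ^ k := by
    rw [sub_pow_char_pow, hψ]
    simp only [map_add, map_sub, map_neg, pderiv_pow, pderiv_X_self,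
      pderiv_X_of_ne (show (1:Fin 3) ≠ 0 by decide), pderiv_X_of_ne (show (2:Fin 3) ≠ 0 by decide),
      pderiv_X_of_ne (show (0:Fin 3) ≠ 1 by decide), pderiv_X_of_ne (show (2:Fin 3) ≠ 1 by decide),
      Nat.add_sub_cancel, hc]
    ring
  have key2 : pderiv 0 ψ + pderiv 2 ψ = (X 0 - X 2) ^ p ^ k := by
    rw [sub_pow_char_pow, hψ]
    simp only [map_add, map_sub, map_neg, pderiv_pow, pderiv_X_self,
      pderiv_X_of_ne (show (1:Fin 3) ≠ 0 by decide), pderiv_X_of_ne (show (2:Fin 3) ≠ 0 by decide),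
      pderiv_X_of_ne (show (0:Fin 3) ≠ 2 by decide), pderiv_X_of_ne (show (1:Fin 3) ≠ 2 by decide),
      Nat.add_sub_cancel, hc]
    ring
  have hX01 : (X 0 - X 1 : MvPolynomial (Fin 3) (ZMod p)) ≠ 0 := by
    refine sub_ne_zero.mpr fun h => ?_
    have := MvPolynomial.X_injective (R := ZMod p) h
    exact absurd this (by decide)
  have hψ0 : ψ ≠ 0 := by
    intro h
    rw [h] at key1
    simp only [map_zero, add_zero] at key1
    exact pow_ne_zero _ hX01 key1.symm
  intro g hg
  by_contra hgu
  have hg0 : g ≠ 0 := by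
    rintro rfl
    exact hψ0 (by simpa using hg)
  obtain ⟨r, hr_irr, hr_dvd⟩ := WfDvdMonoid.exists_irreducible_factor hgu hg0
  have hrr : r * r ∣ ψ := (mul_dvd_mul hr_dvd hr_dvd).trans hg
  obtain ⟨h, hh⟩ := hrr
  have hdvd : ∀ i : Fin 3, r ∣ pderiv i ψ := by
    intro i
    have hψ' : ψ = r * (r * h) := by rw [hh]; ring
    rw [hψ', pderiv_mul]
    exact dvd_add ((dvd_mul_right r h).mul_left _) (dvd_mul_right r _)
  have hr_prime : Prime r :=
    (UniqueFactorizationMonoid.irreducible_iff_prime).mp hr_irr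
  have h1 : r ∣ X 0 - X 1 :=
    hr_prime.dvd_of_dvd_pow (key1 ▸ dvd_add (hdvd 0) (hdvd 1))
  have h2 : r ∣ X 0 - X 2 :=
    hr_prime.dvd_of_dvd_pow (key2 ▸ dvd_add (hdvd 0) (hdvd 2))
  have p1 : Prime (X 0 - X 1 : MvPolynomial (Fin 3) (ZMod p)) := by
    simpa using prime_X0_sub_X_succ p 0
  have p2 : Prime (X 0 - X 2 : MvPolynomial (Fin 3) (ZMod p)) := by
    simpa using prime_X0_sub_X_succ p 1
  have a1 : Associated r (X 0 - X 1) := hr_irr.associated_of_dvd p1.irreducible h1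
  have a2 : Associated r (X 0 - X 2) := hr_irr.associated_of_dvd p2.irreducible h2
  have hdd : (X 0 - X 1 : MvPolynomial (Fin 3) (ZMod p)) ∣ X 0 - X 2 :=
    (a1.symm.trans a2).dvd
  have hsub : (X 0 - X 1 : MvPolynomial (Fin 3) (ZMod p)) ∣ X 1 - X 2 := by
    have := dvd_sub hdd (dvd_refl (X 0 - X 1))
    simpa [sub_sub_sub_cancel_left] using this
  -- substitute X 0 ↦ X 1 to get a contradiction
  have := (aeval (![X 1, X 1, X 2] : Fin 3 → MvPolynomial (Fin 3) (ZMod p))).toRingHom.map_dvd hsub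
  simp only [AlgHom.toRingHom_eq_coe, RingHom.coe_coe, RingHom.toMonoidHom_eq_coe, MonoidHom.coe_coe, map_sub, aeval_X,
    Matrix.cons_val_zero, Matrix.cons_val_one, Matrix.head_cons, Matrix.cons_val_two,
    Matrix.tail_cons, sub_self, zero_dvd_iff, sub_eq_zero] at this
  exact absurd (MvPolynomial.X_injective (R := ZMod p) this) (by decide)
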